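/- Let Φ = (A; {E_i}_{i=0}^d; A*; {E*_i}_{i=0}^d) be a Leonard system on V, with the scalar ν and the maps ρ : ⟨A⟩ → ⟨A*⟩ and ρ* : ⟨A*⟩ → ⟨A⟩ as in the context. Then ρ and ν·ρ* are mutually inverse; explicitly, ρ*(ρ(Y)) = ν^{-1} Y for all Y ∈ ⟨A⟩ and ρ(ρ*(Z)) = ν^{-1} Z for all Z ∈ ⟨A*⟩. In particular, ρ and ρ* are bijective. -/

import Mathlib

noncomputable section

open Finset

variable {F V : Type*} [Field F] [AddCommGroup V] [Module F V]

/-- A matrix is irreducible tridiagonal: each nonzero entry lies on the diagonal,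
subdiagonal or superdiagonal, and every subdiagonal and superdiagonal entry is nonzero. -/
def IsIrredTridiag {n : ℕ} {F : Type*} [Field F] (M : Matrix (Fin n) (Fin n) F) : Prop :=
  (∀ i j : Fin n, ((i : ℕ) + 1 < (j : ℕ) ∨ (j : ℕ) + 1 < (i : ℕ)) → M i j = 0) ∧
  (∀ i j : Fin n, ((i : ℕ) + 1 = (j : ℕ) ∨ (j : ℕ) + 1 = (i : ℕ)) → M i j ≠ 0)

/-- A Leonard pair on `V` (of dimension `d+1`): there is a basis in which `A` is
irreducible tridiagonal and `A*` diagonal, and a basis in which `A*` is irreducible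
tridiagonal and `A` diagonal. -/
def IsLeonardPair (d : ℕ) (A Astar : Module.End F V) : Prop :=
  (∃ b : Module.Basis (Fin (d + 1)) F V,
    IsIrredTridiag (LinearMap.toMatrix b b A) ∧ (LinearMap.toMatrix b b Astar).IsDiag) ∧
  (∃ b : Module.Basis (Fin (d + 1)) F V,
    IsIrredTridiag (LinearMap.toMatrix b b Astar) ∧ (LinearMap.toMatrix b b A).IsDiag)

/-- A Boltzmann pair for the Leonard pair `A, A*` : invertible `W ∈ ⟨A⟩`,
`W* ∈ ⟨A*⟩` with `W A* W⁻¹ = (W*)⁻¹ A W*`. -/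
def IsBoltzmannPair (A Astar W Wstar : Module.End F V) : Prop :=
  W ∈ Algebra.adjoin F {A} ∧ Wstar ∈ Algebra.adjoin F {Astar} ∧
  IsUnit W ∧ IsUnit Wstar ∧
  W * Astar * Ring.inverse W = Ring.inverse Wstar * A * Wstar

/-- `E` is an ordering of the primitive idempotents of the multiplicity-free map `B`. -/
def IsIdemOrdering (d : ℕ) (B : Module.End F V) (E : Fin (d + 1) → Module.End F V) : Prop :=
  (∀ i, E i ≠ 0) ∧ (∀ i j, E i * E j = if i = j then E i else 0) ∧
  (∑ i, E i = 1) ∧ ∃ θ : Fin (d + 1) → F, Function.Injective θ ∧ B = ∑ i, θ i • E i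

/-- `E` is a standard ordering of the primitive idempotents of `B` (relative to `C`):
choosing nonzero `vᵢ ∈ Eᵢ V`, the matrix of `C` in the basis `vᵢ` is irreducible
tridiagonal (and the matrix of `B` is diagonal). -/
def IsStandardOrdering (d : ℕ) (B C : Module.End F V)
    (E : Fin (d + 1) → Module.End F V) : Prop :=
  IsIdemOrdering d B E ∧
  ∃ b : Module.Basis (Fin (d + 1)) F V, (∀ i, E i (b i) = b i) ∧
    IsIrredTridiag (LinearMap.toMatrix b b C) ∧ (LinearMap.toMatrix b b B).IsDiag

/-- A Leonard system on `V`. -/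
def IsLeonardSystem (d : ℕ) (A Astar : Module.End F V)
    (E Estar : Fin (d + 1) → Module.End F V) : Prop :=
  IsLeonardPair d A Astar ∧ IsStandardOrdering d A Astar E ∧ IsStandardOrdering d Astar A Estar

/-- the maps `ρ` and `ν ρ*` are mutually inverse;
in particular `ρ`, `ρ*` are bijective. -/
lemma eq_zero_of_tridiag {d : ℕ} (B : Module.End F V) (b : Module.Basis (Fin (d+1)) F V)
    (htri : IsIrredTridiag (LinearMap.toMatrix b b B))
    (X : Module.End F V) (hX : X ∈ Algebra.adjoin F {B}) (h0 : X (b 0) = 0) : X = 0 := by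
  set M := LinearMap.toMatrix b b B with hM
  have key : ∀ k : Fin (d+1), (∀ j : Fin (d+1), (k:ℕ) < (j:ℕ) →
      b.repr ((B^(k:ℕ)) (b 0)) j = 0) ∧ b.repr ((B^(k:ℕ)) (b 0)) k ≠ 0 := by
    intro k
    induction k using Fin.induction with
    | zero =>
      refine ⟨fun j hj => ?_, by simp⟩
      have hne : (0 : Fin (d+1)) ≠ j := by
        intro h; rw [← h] at hj; simp at hj
      simp only [Fin.val_zero, pow_zero, Module.End.one_apply, Module.Basis.repr_self]
      exact Finsupp.single_eq_of_ne hne.symm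
    | succ i ih =>
      simp only [Fin.coe_castSucc] at ih
      have hrepr : ∀ j, b.repr ((B^((i:ℕ)+1)) (b 0)) j
          = ∑ l, M j l * b.repr ((B^(i:ℕ)) (b 0)) l := by
        intro j
        have h2 : (B^((i:ℕ)+1)) (b 0) = B ((B^(i:ℕ)) (b 0)) := by
          rw [pow_succ', Module.End.mul_apply]
        rw [h2, ← LinearMap.toMatrix_mulVec_repr b b B ((B^(i:ℕ)) (b 0))]
        simp [Matrix.mulVec, dotProduct, hM]
      have hsval : ((i.succ : Fin (d+1)) : ℕ) = (i:ℕ) + 1 := rfl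
      have hcval : ((i.castSucc : Fin (d+1)) : ℕ) = (i:ℕ) := rfl
      constructor
      · intro j hj
        rw [hsval] at hj
        rw [hsval, hrepr]
        apply Finset.sum_eq_zero
        intro l _
        rcases lt_or_ge (i:ℕ) (l:ℕ) with h | h
        · rw [ih.1 l h, mul_zero]
        · rw [htri.1 j l (Or.inr (by omega)), zero_mul]
      · rw [hsval, hrepr]
        rw [Finset.sum_eq_single i.castSucc]
        · exact mul_ne_zero (htri.2 i.succ i.castSucc (Or.inr (by omega))) ih.2
        · intro l _ hl
          rcases lt_trichotomy (l:ℕ) (i:ℕ) with h | h | h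
          · rw [htri.1 i.succ l (Or.inr (by omega)), zero_mul]
          · exact absurd (Fin.ext h) hl
          · rw [ih.1 l h, mul_zero]
        · simp
  set v : Fin (d+1) → V := fun k => (B^(k:ℕ)) (b 0) with hv
  have hdet : IsUnit (b.det v) := by
    rw [Module.Basis.det_apply]
    have htriang : (b.toMatrix v).BlockTriangular id := by
      intro p q hpq
      rw [Module.Basis.toMatrix_apply]
      exact (key q).1 p hpq
    rw [Matrix.det_of_upperTriangular htriang]
    rw [isUnit_iff_ne_zero]
    apply Finset.prod_ne_zero_iff.mpr
    intro p _
    rw [Module.Basis.toMatrix_apply]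
    exact (key p).2
  have hspan : Submodule.span F (Set.range v) = ⊤ := ((Module.Basis.is_basis_iff_det b).mpr hdet).2
  have hcomm : Commute B X := Algebra.commute_of_mem_adjoin_self hX
  apply LinearMap.ext_on hspan
  rintro x ⟨k, rfl⟩
  have : X ((B^(k:ℕ)) (b 0)) = (B^(k:ℕ)) (X (b 0)) := by
    have := (hcomm.pow_left (k:ℕ)).symm
    calc X ((B^(k:ℕ)) (b 0)) = (X * B^(k:ℕ)) (b 0) := rfl
      _ = (B^(k:ℕ) * X) (b 0) := by rw [this]
      _ = (B^(k:ℕ)) (X (b 0)) := rfl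
  simp [hv, this, h0]

theorem rho_rhostar_inverse {F V : Type*} [Field F] [AddCommGroup V] [Module F V]
    (d : ℕ) (A Astar : Module.End F V) (E Estar : Fin (d + 1) → Module.End F V)
    (hLS : IsLeonardSystem d A Astar E Estar)
    (ν : F) (hν0 : ν ≠ 0)
    (hν1 : ν • (E 0 * Estar 0 * E 0) = E 0)
    (hν2 : ν • (Estar 0 * E 0 * Estar 0) = Estar 0)
    (ρ ρs : Module.End F V → Module.End F V)
    (hρ : ∀ Y ∈ Algebra.adjoin F {A}, ρ Y ∈ Algebra.adjoin F {Astar} ∧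
      Y * Estar 0 * E 0 = ρ Y * E 0)
    (hρs : ∀ Z ∈ Algebra.adjoin F {Astar}, ρs Z ∈ Algebra.adjoin F {A} ∧
      Z * E 0 * Estar 0 = ρs Z * Estar 0) :
    (∀ Y ∈ Algebra.adjoin F {A}, ρs (ρ Y) = ν⁻¹ • Y) ∧
    (∀ Z ∈ Algebra.adjoin F {Astar}, ρ (ρs Z) = ν⁻¹ • Z) ∧
    Set.BijOn ρ (Algebra.adjoin F {A} : Set (Module.End F V))
      (Algebra.adjoin F {Astar} : Set (Module.End F V)) ∧
    Set.BijOn ρs (Algebra.adjoin F {Astar} : Set (Module.End F V))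
      (Algebra.adjoin F {A} : Set (Module.End F V)) := by
  obtain ⟨hLP, hSOE, hSOEs⟩ := hLS
  obtain ⟨_, bs, hbs, htriA, _⟩ := hSOEs
  obtain ⟨_, bb, hbb, htriAs, _⟩ := hSOE
  have cancelA : ∀ Y ∈ Algebra.adjoin F {A}, Y * Estar 0 = 0 → Y = 0 := by
    intro Y hY h
    apply eq_zero_of_tridiag A bs htriA Y hY
    have h2 : Y (Estar 0 (bs 0)) = 0 := by
      rw [← Module.End.mul_apply, h]; rfl
    rwa [hbs 0] at h2
  have cancelAs : ∀ Z ∈ Algebra.adjoin F {Astar}, Z * E 0 = 0 → Z = 0 := by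
    intro Z hZ h
    apply eq_zero_of_tridiag Astar bb htriAs Z hZ
    have h2 : Z (E 0 (bb 0)) = 0 := by
      rw [← Module.End.mul_apply, h]; rfl
    rwa [hbb 0] at h2
  have hEE : Estar 0 * E 0 * Estar 0 = ν⁻¹ • Estar 0 := by
    have h := congrArg (fun t => ν⁻¹ • t) hν2
    simpa [smul_smul, inv_mul_cancel₀ hν0] using h
  have hEEs : E 0 * Estar 0 * E 0 = ν⁻¹ • E 0 := by
    have h := congrArg (fun t => ν⁻¹ • t) hν1
    simpa [smul_smul, inv_mul_cancel₀ hν0] using h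
  have part1 : ∀ Y ∈ Algebra.adjoin F {A}, ρs (ρ Y) = ν⁻¹ • Y := by
    intro Y hY
    obtain ⟨hρY, eq1⟩ := hρ Y hY
    obtain ⟨hρsρY, eq2⟩ := hρs (ρ Y) hρY
    have heq : (ρs (ρ Y) - ν⁻¹ • Y) * Estar 0 = 0 := by
      rw [sub_mul, ← eq2, ← eq1]
      have : Y * Estar 0 * E 0 * Estar 0 = Y * (Estar 0 * E 0 * Estar 0) := by
        rw [mul_assoc, mul_assoc, mul_assoc]
      rw [this, hEE, mul_smul_comm, smul_mul_assoc, sub_self]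
    exact sub_eq_zero.mp (cancelA _
      (Subalgebra.sub_mem _ hρsρY (Subalgebra.smul_mem _ hY _)) heq)
  have part2 : ∀ Z ∈ Algebra.adjoin F {Astar}, ρ (ρs Z) = ν⁻¹ • Z := by
    intro Z hZ
    obtain ⟨hρsZ, eq1⟩ := hρs Z hZ
    obtain ⟨hρρsZ, eq2⟩ := hρ (ρs Z) hρsZ
    have heq : (ρ (ρs Z) - ν⁻¹ • Z) * E 0 = 0 := by
      rw [sub_mul, ← eq2, ← eq1]
      have : Z * E 0 * Estar 0 * E 0 = Z * (E 0 * Estar 0 * E 0) := by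
        rw [mul_assoc, mul_assoc, mul_assoc]
      rw [this, hEEs, mul_smul_comm, smul_mul_assoc, sub_self]
    exact sub_eq_zero.mp (cancelAs _
      (Subalgebra.sub_mem _ hρρsZ (Subalgebra.smul_mem _ hZ _)) heq)
  have smul_cancel : ∀ Y1 Y2 : Module.End F V, ν⁻¹ • Y1 = ν⁻¹ • Y2 → Y1 = Y2 := by
    intro Y1 Y2 h
    have := congrArg (fun t => ν • t) h
    simpa [smul_smul, mul_inv_cancel₀ hν0] using this
  refine ⟨part1, part2, ⟨fun Y hY => (hρ Y hY).1, ?_, ?_⟩,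
    ⟨fun Z hZ => (hρs Z hZ).1, ?_, ?_⟩⟩
  · intro Y1 h1 Y2 h2 h
    have e1 := part1 Y1 h1
    rw [h, part1 Y2 h2] at e1
    exact (smul_cancel _ _ e1).symm
  · intro Z hZ
    have hZ' : Z ∈ Algebra.adjoin F {Astar} := hZ
    have hmem : ν • ρs Z ∈ Algebra.adjoin F {A} :=
      Subalgebra.smul_mem _ (hρs Z hZ').1 _
    refine ⟨ν • ρs Z, hmem, ?_⟩
    obtain ⟨hm, eqW⟩ := hρ (ν • ρs Z) hmem
    obtain ⟨hm2, eq3⟩ := hρ (ρs Z) (hρs Z hZ').1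
    have heq : (ρ (ν • ρs Z) - Z) * E 0 = 0 := by
      rw [sub_mul, ← eqW, smul_mul_assoc, smul_mul_assoc, eq3, part2 Z hZ',
        smul_mul_assoc, smul_smul, mul_inv_cancel₀ hν0, one_smul, sub_self]
    exact sub_eq_zero.mp (cancelAs _ (Subalgebra.sub_mem _ hm hZ') heq)
  · intro Z1 h1 Z2 h2 h
    have e1 := part2 Z1 h1
    rw [h, part2 Z2 h2] at e1
    exact (smul_cancel _ _ e1).symm
  · intro Y hY
    have hY' : Y ∈ Algebra.adjoin F {A} := hY
    have hmem : ν • ρ Y ∈ Algebra.adjoin F {Astar} :=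
      Subalgebra.smul_mem _ (hρ Y hY').1 _
    refine ⟨ν • ρ Y, hmem, ?_⟩
    obtain ⟨hm, eqW⟩ := hρs (ν • ρ Y) hmem
    obtain ⟨hm2, eq3⟩ := hρs (ρ Y) (hρ Y hY').1
    have heq : (ρs (ν • ρ Y) - Y) * Estar 0 = 0 := by
      rw [sub_mul, ← eqW, smul_mul_assoc, smul_mul_assoc, eq3, part1 Y hY',
        smul_mul_assoc, smul_smul, mul_inv_cancel₀ hν0, one_smul, sub_self]
    exact sub_eq_zero.mp (cancelA _ (Subalgebra.sub_mem _ hm hY') heq)
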